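/- The sign of W_n at the point −b/a is as follows: (i) if ad < bc, then (−1)^⌈n/2⌉ · W_n(−b/a) > 0 for every n ≥ 0; (ii) if ad = bc, then W_n(−b/a) = 0 for every n ≥ 2; (iii) if ad > bc, then (−1)^n · W_n(−b/a) > 0 for every n ≥ 0. -/

import Mathlib

open Polynomial

/-- The sign of `W n` at the point `-b/a`: if `a*d < b*c` then
`(-1)^⌈n/2⌉ * W n (-b/a) > 0`; if `a*d = b*c` then `W n (-b/a) = 0` for `n ≥ 2`;
if `a*d > b*c` then `(-1)^n * W n (-b/a) > 0`. -/
theorem stmt_5 (a b c d : ℝ) (ha : 0 < a) (hb : 0 < b) (hc : 0 < c) (hd : 0 < d)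
    (W : ℕ → Polynomial ℝ)
    (hW0 : W 0 = 1) (hW1 : W 1 = X)
    (hW : ∀ n : ℕ, W (n + 2) = (C a * X + C b) * W (n + 1) + (C c * X + C d) * W n) :
    (a * d < b * c → ∀ n : ℕ, 0 < (-1 : ℝ) ^ ((n + 1) / 2) * (W n).eval (-b / a)) ∧
    (a * d = b * c → ∀ n : ℕ, 2 ≤ n → (W n).eval (-b / a) = 0) ∧
    (b * c < a * d → ∀ n : ℕ, 0 < (-1 : ℝ) ^ n * (W n).eval (-b / a)) := by
  set x : ℝ := -b / a with hx
  have ha' : a ≠ 0 := ha.ne'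
  have hax : a * x + b = 0 := by rw [hx]; field_simp; ring
  have key : ∀ n : ℕ, (W (n + 2)).eval x = ((a * d - b * c) / a) * (W n).eval x := by
    intro n
    have := congrArg (Polynomial.eval x) (hW n)
    simp only [eval_add, eval_mul, eval_C, eval_X] at this
    rw [this, hax]
    have hcx : c * x + d = (a * d - b * c) / a := by rw [hx]; field_simp; ring
    rw [hcx]; ring
  have he0 : (W 0).eval x = 1 := by simp [hW0]
  have he1 : (W 1).eval x = x := by simp [hW1]
  have hx0 : x < 0 := by
    rw [hx]; exact div_neg_of_neg_of_pos (neg_neg_of_pos hb) ha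
  refine ⟨?_, ?_, ?_⟩
  · intro h n
    have hk : (a * d - b * c) / a < 0 := div_neg_of_neg_of_pos (by linarith) ha
    induction n using Nat.twoStepInduction with
    | zero => simp [he0]
    | one => simp [he1]; linarith
    | more n ih _ =>
      rw [key n]
      have hdiv : (n + 2 + 1) / 2 = (n + 1) / 2 + 1 := by omega
      rw [hdiv, pow_succ]
      nlinarith [ih]
  · intro h n hn
    obtain ⟨m, rfl⟩ : ∃ m, n = m + 2 := ⟨n - 2, by omega⟩
    rw [key m]
    have : a * d - b * c = 0 := by linarith
    simp [this]
  · intro h n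
    have hk : 0 < (a * d - b * c) / a := div_pos (by linarith) ha
    induction n using Nat.twoStepInduction with
    | zero => simp [he0]
    | one => simp [he1]; linarith
    | more n ih _ =>
      rw [key n, pow_succ, pow_succ]
      nlinarith [ih]
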